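/- With W as in the previous construction (w_{1i} = 1/(n-1) for i≠1, w_{2i} = 1/(n-1) for i≠2, w_{j1} = 1-δ, w_{j2} = δ for j > 2), the influence vector has first coefficient x = (n-1)(n-1-α(1-δ)(n-2)-δ(n-2))/(n(2n-3-α(n-2))), second coefficient y = (n-1)((1-α)δ(n-2)+1)/(n(2n-3-α(n-2))), and all remaining coefficients equal to z = (n-α)/(n(2n-3-α(n-2))). -/

import Mathlib

open Matrix BigOperators

/-- The influence vector of an input-output matrix `W` with labor share `α`. -/
noncomputable def influence {n : ℕ} (α : ℝ) (W : Matrix (Fin n) (Fin n) ℝ) : Fin n → ℝ :=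
  (α / (n : ℝ)) • ((1 - (1 - α) • Wᵀ)⁻¹ *ᵥ fun _ => 1)

lemma sum3_aux {n : ℕ} (hn : 2 < n) (A B C : ℝ) :
    ∑ j : Fin n, (if (j:ℕ) = 0 then A else if (j:ℕ) = 1 then B else C)
      = A + B + ((n:ℝ) - 2) * C := by
  have h0 : (0:ℕ) < n := by omega
  have h1 : (1:ℕ) < n := by omega
  have key : ∀ j : Fin n, (if (j:ℕ) = 0 then A else if (j:ℕ) = 1 then B else C)
      = C + ((if j = (⟨0, h0⟩ : Fin n) then A - C else 0)
          + (if j = (⟨1, h1⟩ : Fin n) then B - C else 0)) := by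
    intro j
    by_cases hj0 : (j:ℕ) = 0 <;> by_cases hj1 : (j:ℕ) = 1
    · omega
    · simp [hj0, hj1, Fin.ext_iff]
    · simp [hj0, hj1, Fin.ext_iff]
    · simp [hj0, hj1, Fin.ext_iff]
  rw [Finset.sum_congr rfl fun j _ => key j]
  rw [Finset.sum_add_distrib, Finset.sum_add_distrib, Finset.sum_const,
    Finset.sum_ite_eq' Finset.univ, Finset.sum_ite_eq' Finset.univ]
  simp [Finset.card_univ, nsmul_eq_mul]
  ring

lemma vecMul_expand {n : ℕ} (α : ℝ) (W : Matrix (Fin n) (Fin n) ℝ) (v : Fin n → ℝ) (i : Fin n) :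
    (v ᵥ* (1 - (1 - α) • Wᵀ)) i = v i - (1 - α) * ∑ j, v j * W i j := by
  simp [Matrix.vecMul, dotProduct, Matrix.sub_apply, Matrix.one_apply, Matrix.smul_apply,
    Matrix.transpose_apply, mul_sub, Finset.sum_sub_distrib, Finset.mul_sum, mul_comm,
    mul_left_comm, Finset.sum_ite_eq']

lemma mulVec_expand {n : ℕ} (α : ℝ) (W : Matrix (Fin n) (Fin n) ℝ) (v : Fin n → ℝ) (i : Fin n) :
    ((1 - (1 - α) • Wᵀ) *ᵥ v) i = v i - (1 - α) * ∑ j, W j i * v j := by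
  simp only [Matrix.mulVec, dotProduct, Matrix.sub_apply, Matrix.smul_apply,
    Matrix.transpose_apply, smul_eq_mul, sub_mul, Matrix.one_apply, ite_mul, one_mul, zero_mul,
    Finset.sum_sub_distrib, Finset.sum_ite_eq, Finset.mem_univ, if_true, Finset.mul_sum]
  ring_nf

set_option maxHeartbeats 1000000 in
/-- Exact coefficients of the influence vector for the construction `W` with rows
`1,2` uniform and rows `j > 2` weighted `1-δ` to firm `1` and `δ` to firm `2`. -/
theorem influence_construction_coefficients (n : ℕ) (hn : 2 < n) (α δ : ℝ)
    (hα0 : 0 < α) (hα1 : α < 1) (hδ0 : 0 ≤ δ) (hδ1 : δ < 1)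
    (W : Matrix (Fin n) (Fin n) ℝ)
    (hW : ∀ i j : Fin n, W i j =
      if i.val = 0 then (if j.val = 0 then 0 else 1 / ((n : ℝ) - 1))
      else if i.val = 1 then (if j.val = 1 then 0 else 1 / ((n : ℝ) - 1))
      else if j.val = 0 then 1 - δ else if j.val = 1 then δ else 0) :
    influence α W ⟨0, by omega⟩ =
      ((n : ℝ) - 1) * ((n : ℝ) - 1 - α * (1 - δ) * ((n : ℝ) - 2) - δ * ((n : ℝ) - 2)) /
        ((n : ℝ) * (2 * (n : ℝ) - 3 - α * ((n : ℝ) - 2))) ∧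
    influence α W ⟨1, by omega⟩ =
      ((n : ℝ) - 1) * ((1 - α) * δ * ((n : ℝ) - 2) + 1) /
        ((n : ℝ) * (2 * (n : ℝ) - 3 - α * ((n : ℝ) - 2))) ∧
    ∀ j : Fin n, 2 ≤ j.val →
      influence α W j = ((n : ℝ) - α) / ((n : ℝ) * (2 * (n : ℝ) - 3 - α * ((n : ℝ) - 2))) := by
  have hn3 : (3:ℝ) ≤ (n:ℝ) := by exact_mod_cast hn
  have hn0 : (n:ℝ) ≠ 0 := by linarith
  have hn1 : (n:ℝ) - 1 ≠ 0 := by linarith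
  have hα : α ≠ 0 := ne_of_gt hα0
  set D : ℝ := 2 * (n:ℝ) - 3 - α * ((n:ℝ) - 2) with hDdef
  have hD : D ≠ 0 := by
    have : α * ((n:ℝ) - 2) < 1 * ((n:ℝ) - 2) := by
      apply mul_lt_mul_of_pos_right hα1; linarith
    simp only [hDdef]; nlinarith
  set M : Matrix (Fin n) (Fin n) ℝ := 1 - (1 - α) • Wᵀ with hMdef
  -- nonnegativity and row sums of W
  have hWnn : ∀ i j, 0 ≤ W i j := by
    intro i j
    rw [hW]
    have : (0:ℝ) ≤ 1 / ((n:ℝ) - 1) := by apply div_nonneg <;> linarith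
    split_ifs <;> linarith
  have hrow : ∀ i, ∑ j, W i j = 1 := by
    intro i
    by_cases h0 : (i:ℕ) = 0
    · have : ∀ j : Fin n, W i j =
          if (j:ℕ) = 0 then 0 else if (j:ℕ) = 1 then 1 / ((n:ℝ) - 1)
          else 1 / ((n:ℝ) - 1) := by
        intro j
        rw [hW i j, if_pos h0]
        by_cases hj0 : (j:ℕ) = 0 <;> by_cases hj1 : (j:ℕ) = 1 <;> simp [hj0, hj1]
      rw [Finset.sum_congr rfl fun j _ => this j, sum3_aux hn]
      field_simp
      ring
    · by_cases h1 : (i:ℕ) = 1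
      · have : ∀ j : Fin n, W i j =
            if (j:ℕ) = 0 then 1 / ((n:ℝ) - 1) else if (j:ℕ) = 1 then 0
            else 1 / ((n:ℝ) - 1) := by
          intro j
          rw [hW i j, if_neg h0, if_pos h1]
          by_cases hj0 : (j:ℕ) = 0 <;> by_cases hj1 : (j:ℕ) = 1 <;> simp [hj0, hj1] <;> omega
        rw [Finset.sum_congr rfl fun j _ => this j, sum3_aux hn]
        field_simp
        ring
      · have : ∀ j : Fin n, W i j =
            if (j:ℕ) = 0 then 1 - δ else if (j:ℕ) = 1 then δ else 0 := by
          intro j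
          rw [hW i j, if_neg h0, if_neg h1]
        rw [Finset.sum_congr rfl fun j _ => this j, sum3_aux hn]
        ring
  -- M is invertible
  have hM : IsUnit M := by
    rw [← Matrix.vecMul_injective_iff_isUnit]
    intro x y hxy
    replace hxy : x ᵥ* M = y ᵥ* M := hxy
    have hz : (x - y) ᵥ* M = 0 := by
      rw [Matrix.sub_vecMul, hxy, sub_self]
    set z : Fin n → ℝ := x - y with hzdef
    have hz0 : z = 0 := by
      haveI : Nonempty (Fin n) := ⟨⟨0, by omega⟩⟩
      obtain ⟨i, hi⟩ := Finite.exists_max fun k => |z k|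
      have hzi : z i = (1 - α) * ∑ j, z j * W i j := by
        have := congrFun hz i
        rw [hMdef, vecMul_expand] at this
        simp only [Pi.zero_apply] at this
        linarith
      have hle : |z i| ≤ (1 - α) * |z i| := by
        calc |z i| = |(1 - α) * ∑ j, z j * W i j| := by rw [hzi]
          _ = (1 - α) * |∑ j, z j * W i j| := by
              rw [abs_mul, abs_of_nonneg (by linarith : (0:ℝ) ≤ 1 - α)]
          _ ≤ (1 - α) * ∑ j, |z j * W i j| := by
              apply mul_le_mul_of_nonneg_left (Finset.abs_sum_le_sum_abs _ _) (by linarith)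
          _ ≤ (1 - α) * ∑ j, |z i| * W i j := by
              apply mul_le_mul_of_nonneg_left _ (by linarith)
              apply Finset.sum_le_sum
              intro j _
              rw [abs_mul, abs_of_nonneg (hWnn i j)]
              exact mul_le_mul_of_nonneg_right (hi j) (hWnn i j)
          _ = (1 - α) * |z i| := by rw [← Finset.mul_sum, hrow i, mul_one]
      have hzi0 : |z i| = 0 := by nlinarith [abs_nonneg (z i)]
      funext k
      have := hi k
      rw [hzi0] at this
      simpa [abs_nonpos_iff] using this
    have := sub_eq_zero.mp (hzdef ▸ hz0)
    exact this
  have hdet : IsUnit M.det := (Matrix.isUnit_iff_isUnit_det M).mp hM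
  -- the candidate solution
  set x0 : ℝ := ((n:ℝ) - 1) * ((n:ℝ) - 1 - α * (1 - δ) * ((n:ℝ) - 2) - δ * ((n:ℝ) - 2)) /
      ((n:ℝ) * D) with hx0
  set y0 : ℝ := ((n:ℝ) - 1) * ((1 - α) * δ * ((n:ℝ) - 2) + 1) / ((n:ℝ) * D) with hy0
  set z0 : ℝ := ((n:ℝ) - α) / ((n:ℝ) * D) with hz0
  set u : Fin n → ℝ := fun j => if (j:ℕ) = 0 then (n:ℝ) / α * x0
      else if (j:ℕ) = 1 then (n:ℝ) / α * y0 else (n:ℝ) / α * z0 with hu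
  have hMu : M *ᵥ u = fun _ => 1 := by
    funext i
    rw [hMdef, mulVec_expand]
    by_cases h0 : (i:ℕ) = 0
    · have hsum : ∀ j : Fin n, W j i * u j =
          if (j:ℕ) = 0 then 0
          else if (j:ℕ) = 1 then 1 / ((n:ℝ) - 1) * ((n:ℝ) / α * y0)
          else (1 - δ) * ((n:ℝ) / α * z0) := by
        intro j
        rw [hW j i, hu]
        by_cases hj0 : (j:ℕ) = 0 <;> by_cases hj1 : (j:ℕ) = 1 <;>
          simp [hj0, hj1, h0] <;> omega
      rw [Finset.sum_congr rfl fun j _ => hsum j, sum3_aux hn]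
      simp only [hu, h0]
      norm_num
      rw [hx0, hy0, hz0]
      field_simp
      ring
    · by_cases h1 : (i:ℕ) = 1
      · have hsum : ∀ j : Fin n, W j i * u j =
            if (j:ℕ) = 0 then 1 / ((n:ℝ) - 1) * ((n:ℝ) / α * x0)
            else if (j:ℕ) = 1 then 0
            else δ * ((n:ℝ) / α * z0) := by
          intro j
          rw [hW j i, hu]
          by_cases hj0 : (j:ℕ) = 0 <;> by_cases hj1 : (j:ℕ) = 1 <;>
            simp [hj0, hj1, h0, h1] <;> omega
        rw [Finset.sum_congr rfl fun j _ => hsum j, sum3_aux hn]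
        simp only [hu, h0, h1]
        norm_num
        rw [hx0, hy0, hz0]
        field_simp
        ring
      · have hsum : ∀ j : Fin n, W j i * u j =
            if (j:ℕ) = 0 then 1 / ((n:ℝ) - 1) * ((n:ℝ) / α * x0)
            else if (j:ℕ) = 1 then 1 / ((n:ℝ) - 1) * ((n:ℝ) / α * y0)
            else 0 := by
          intro j
          rw [hW j i, hu]
          by_cases hj0 : (j:ℕ) = 0 <;> by_cases hj1 : (j:ℕ) = 1 <;>
            simp [hj0, hj1, h0, h1] <;> omega
        rw [Finset.sum_congr rfl fun j _ => hsum j, sum3_aux hn]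
        simp only [hu, h0, h1]
        norm_num
        rw [hx0, hy0, hz0]
        field_simp
        ring
  have hinv : M⁻¹ *ᵥ (fun _ => (1:ℝ)) = u := by
    rw [← hMu, Matrix.mulVec_mulVec, Matrix.nonsing_inv_mul M hdet, Matrix.one_mulVec]
  have hval : ∀ k : Fin n, influence α W k = α / (n:ℝ) * u k := by
    intro k
    simp only [influence]
    rw [← hMdef, hinv]
    simp
  have hcancel : ∀ t : ℝ, α / (n:ℝ) * ((n:ℝ) / α * t) = t := by
    intro t; field_simp
  refine ⟨?_, ?_, ?_⟩
  · rw [hval, show u ⟨0, by omega⟩ = (n:ℝ)/α * x0 by simp [hu], hcancel, hx0]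
  · rw [hval, show u ⟨1, by omega⟩ = (n:ℝ)/α * y0 by simp [hu], hcancel, hy0]
  · intro j hj
    have hj0 : ¬((j:ℕ) = 0) := by omega
    have hj1 : ¬((j:ℕ) = 1) := by omega
    rw [hval, show u j = (n:ℝ)/α * z0 by simp [hu, hj0, hj1], hcancel, hz0]
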